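/- Let V be an n-dimensional vector space over F_q and A ∈ GL(V) a matrix of degree k (i.e., rank(A − I) = k) whose eigenvalues in F_q are all equal to 1 (equivalently, every eigenvalue of A is either 1 or lies outside F_q). Then for every t with t ≤ k/2 there exists a t-dimensional subspace W of V with W ∩ A(W) = {0}. -/

import Mathlib

open Module Submodule

private lemma stmt8_comap_le {F : Type*} [Field F] {n : ℕ}
    (f : (Fin n → F) →ₗ[F] (Fin n → F)) (U : Submodule F (Fin n → F)) :
    finrank F (U.comap f) ≤ finrank F (LinearMap.ker f) + finrank F U := by
  set p := U.comap f with hp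
  let g : p →ₗ[F] (Fin n → F) := f.domRestrict p
  have h1 : finrank F (LinearMap.range g) + finrank F (LinearMap.ker g) = finrank F p :=
    LinearMap.finrank_range_add_finrank_ker g
  have h2 : finrank F (LinearMap.range g) ≤ finrank F U := by
    apply Submodule.finrank_mono
    rintro x ⟨⟨y, hy⟩, rfl⟩
    exact hy
  have h3 : finrank F (LinearMap.ker g) ≤ finrank F (LinearMap.ker f) := by
    rw [← Submodule.finrank_map_subtype_eq p (LinearMap.ker g)]
    apply Submodule.finrank_mono
    rintro x ⟨⟨y, hy⟩, hz, rfl⟩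
    exact hz
  omega

private lemma stmt8_card_le {F : Type*} [Field F] [Fintype F] {n : ℕ}
    (W : Submodule F (Fin n → F)) {d : ℕ} (h : finrank F W ≤ d) :
    ((W : Set (Fin n → F)).toFinite.toFinset).card ≤ Fintype.card F ^ d := by
  have : Fintype W := Fintype.ofFinite W
  rw [← Set.ncard_eq_toFinset_card, ← Nat.card_coe_set_eq]
  have he : Nat.card ↥(W : Set (Fin n → F)) = Nat.card W := Nat.card_congr (Equiv.refl _)
  rw [he, Nat.card_eq_fintype_card, card_eq_pow_finrank (K := F)]
  exact Nat.pow_le_pow_right Fintype.card_pos h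

private lemma stmt8_ker_bot {F : Type*} [Field F] {n : ℕ}
    (M : Matrix (Fin n) (Fin n) F) (h : IsUnit M) :
    LinearMap.ker M.mulVecLin = ⊥ := by
  rw [LinearMap.ker_eq_bot]
  have h1 : ((↑h.unit⁻¹ : Matrix (Fin n) (Fin n) F) * M).mulVecLin = LinearMap.id := by
    rw [h.val_inv_mul, Matrix.mulVecLin_one]
  have hli : Function.LeftInverse
      (↑h.unit⁻¹ : Matrix (Fin n) (Fin n) F).mulVecLin M.mulVecLin := by
    intro x
    have := congrFun (congrArg DFunLike.coe h1) x
    simpa [Matrix.mulVecLin_mul] using this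
  exact hli.injective

/-- If A ∈ GL_n(F_q) has degree k = rank(A − I) and its only eigenvalue in F_q is 1,
then for every t with t ≤ k/2 there is a t-dimensional subspace W with W ∩ A(W) = 0. -/
theorem stmt8 (F : Type*) [Field F] [Fintype F] (n k : ℕ)
    (A : Matrix (Fin n) (Fin n) F) (hA : IsUnit A)
    (hk : (A - 1).rank = k)
    (heig : ∀ x : F, x ≠ 1 → IsUnit (A - x • (1 : Matrix (Fin n) (Fin n) F)))
    (t : ℕ) (ht : 2 * t ≤ k) :
    ∃ W : Submodule F (Fin n → F), Module.finrank F W = t ∧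
      W ⊓ W.map A.mulVecLin = ⊥ := by
  classical
  set q := Fintype.card F with hq
  have hq2 : 2 ≤ q := Fintype.one_lt_card
  have hkn : k ≤ n := by
    rw [← hk]
    simpa using (A - 1).rank_le_card_width
  have hVn : finrank F (Fin n → F) = n := by simp
  -- dimension of the kernel of A - 1
  have hker1 : finrank F (LinearMap.ker (A - 1).mulVecLin) = n - k := by
    have h := LinearMap.finrank_range_add_finrank_ker (A - 1).mulVecLin
    rw [hVn] at h
    have : finrank F (LinearMap.range (A - 1).mulVecLin) = k := hk
    omega
  -- the main inductive construction
  have key : ∀ i : ℕ, i ≤ t → ∃ v : Fin i → (Fin n → F),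
      LinearIndependent F (Sum.elim v (A.mulVecLin ∘ v)) := by
    intro i hi
    induction i with
    | zero => exact ⟨fun j => 0, linearIndependent_empty_type⟩
    | succ i ih =>
      obtain ⟨v, hv⟩ := ih (Nat.le_of_succ_le hi)
      set U : Submodule F (Fin n → F) :=
        span F (Set.range (Sum.elim v (A.mulVecLin ∘ v))) with hUdef
      have hUdim : finrank F U ≤ 2 * i := by
        have := finrank_range_le_card (R := F) (Sum.elim v (A.mulVecLin ∘ v))
        simpa [Set.finrank, two_mul] using this
      have hik : 2 * i + 2 ≤ k := by omega
      have hn2 : 2 ≤ n := by omega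
      -- dimension bound for the preimages
      have hcomap : ∀ c : F,
          finrank F (U.comap (A - c • (1 : Matrix (Fin n) (Fin n) F)).mulVecLin) ≤ n - 2 := by
        intro c
        refine le_trans (stmt8_comap_le _ _) ?_
        by_cases hc : c = 1
        · subst hc
          rw [one_smul, hker1]
          omega
        · rw [stmt8_ker_bot _ (heig c hc), finrank_bot]
          omega
      -- counting: find a good vector x
      let S : F → Finset (Fin n → F) := fun c =>
        ((U.comap (A - c • (1 : Matrix (Fin n) (Fin n) F)).mulVecLin :
          Submodule F (Fin n → F)) : Set (Fin n → F)).toFinite.toFinset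
      let bad : Finset (Fin n → F) :=
        (U : Set (Fin n → F)).toFinite.toFinset ∪ Finset.univ.biUnion S
      have hbad : bad.card < Fintype.card (Fin n → F) := by
        have hU : ((U : Set (Fin n → F)).toFinite.toFinset).card ≤ q ^ (n - 2) :=
          stmt8_card_le U (by omega)
        have hS : ∀ c : F, (S c).card ≤ q ^ (n - 2) := fun c =>
          stmt8_card_le _ (hcomap c)
        have h1 : bad.card ≤ q ^ (n - 2) + q * q ^ (n - 2) := by
          refine le_trans (Finset.card_union_le _ _) ?_
          refine Nat.add_le_add hU ?_
          refine le_trans (Finset.card_biUnion_le) ?_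
          calc ∑ c : F, (S c).card ≤ ∑ _c : F, q ^ (n - 2) :=
                Finset.sum_le_sum (fun c _ => hS c)
            _ = q * q ^ (n - 2) := by simp [Finset.sum_const, mul_comm, hq]
        have h2 : Fintype.card (Fin n → F) = q ^ n := by simp [hq]
        rw [h2]
        have h3 : q ^ (n - 2) + q * q ^ (n - 2) < q * q * q ^ (n - 2) := by
          nlinarith [pow_pos (lt_of_lt_of_le (by norm_num) hq2) (n - 2)]
        have h4 : q * q * q ^ (n - 2) = q ^ n := by
          rw [← pow_two, ← pow_add]
          congr 1
          omega
        omega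
      obtain ⟨x, hx⟩ : ∃ x, x ∉ bad := by
        by_contra h
        push_neg at h
        have : (Finset.univ : Finset (Fin n → F)).card ≤ bad.card :=
          Finset.card_le_card (fun y _ => h y)
        rw [Finset.card_univ] at this
        omega
      have hxU : x ∉ U := by
        intro hxu
        exact hx (Finset.mem_union_left _ ((Set.Finite.mem_toFinset _).mpr hxu))
      have hxc : ∀ c : F, A.mulVecLin x - c • x ∉ U := by
        intro c hcx
        apply hx
        refine Finset.mem_union_right _ (Finset.mem_biUnion.mpr ⟨c, Finset.mem_univ _, ?_⟩)
        simp only [S, Set.Finite.mem_toFinset, SetLike.mem_coe, Submodule.mem_comap]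
        have : (A - c • (1 : Matrix (Fin n) (Fin n) F)).mulVecLin x
            = A.mulVecLin x - c • x := by
          simp [Matrix.mulVecLin_apply, Matrix.sub_mulVec, Matrix.smul_mulVec,
            Matrix.one_mulVec]
        rw [this]
        exact hcx
      -- coefficient lemma
      have hcoef : ∀ a b : F, a • x + b • A.mulVecLin x ∈ U → a = 0 ∧ b = 0 := by
        intro a b hab
        by_cases hb : b = 0
        · subst hb
          rw [zero_smul, add_zero] at hab
          refine ⟨?_, rfl⟩
          by_contra ha
          exact hxU (by simpa [smul_smul, inv_mul_cancel₀ ha] using U.smul_mem a⁻¹ hab)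
        · exfalso
          apply hxc (-(b⁻¹ * a))
          have : A.mulVecLin x - (-(b⁻¹ * a)) • x = b⁻¹ • (a • x + b • A.mulVecLin x) := by
            rw [smul_add, smul_smul, smul_smul, inv_mul_cancel₀ hb, one_smul]
            rw [neg_smul, sub_neg_eq_add, add_comm]
          rw [this]
          exact U.smul_mem _ hab
      -- extend the family
      refine ⟨Fin.snoc v x, ?_⟩
      rw [Fintype.linearIndependent_iff]
      intro g hg
      set a := g (Sum.inl (Fin.last i)) with ha
      set b := g (Sum.inr (Fin.last i)) with hb
      set Ssum : Fin n → F := (∑ j : Fin i, g (Sum.inl j.castSucc) • v j)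
        + ∑ j : Fin i, g (Sum.inr j.castSucc) • A.mulVecLin (v j) with hSsum
      have hsum : Ssum + (a • x + b • A.mulVecLin x) = 0 := by
        rw [← hg, Fintype.sum_sum_type]
        rw [Fin.sum_univ_castSucc (f := fun j => g (Sum.inl j) • Sum.elim (Fin.snoc v x)
          (A.mulVecLin ∘ Fin.snoc v x) (Sum.inl j))]
        rw [Fin.sum_univ_castSucc (f := fun j => g (Sum.inr j) • Sum.elim (Fin.snoc v x)
          (A.mulVecLin ∘ Fin.snoc v x) (Sum.inr j))]
        simp only [Sum.elim_inl, Sum.elim_inr, Function.comp_apply, Fin.snoc_castSucc,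
          Fin.snoc_last, hSsum]
        abel
      have hSU : Ssum ∈ U := by
        exact U.add_mem
          (Submodule.sum_mem _ (fun j _ => U.smul_mem _
            (Submodule.subset_span ⟨Sum.inl j, rfl⟩)))
          (Submodule.sum_mem _ (fun j _ => U.smul_mem _
            (Submodule.subset_span ⟨Sum.inr j, rfl⟩)))
      have hmem : a • x + b • A.mulVecLin x ∈ U := by
        have : a • x + b • A.mulVecLin x = -Ssum := by
          rw [eq_neg_iff_add_eq_zero, add_comm]
          exact hsum
        rw [this]
        exact U.neg_mem hSU
      obtain ⟨ha0, hb0⟩ := hcoef a b hmem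
      have hS0 : Ssum = 0 := by
        rw [ha0, hb0, zero_smul, zero_smul, add_zero, add_zero] at hsum
        exact hsum
      rw [Fintype.linearIndependent_iff] at hv
      have hold := hv (fun j => Sum.elim (fun p : Fin i => g (Sum.inl p.castSucc))
        (fun p : Fin i => g (Sum.inr p.castSucc)) j) (by
          rw [Fintype.sum_sum_type]
          simpa [hSsum] using hS0)
      rintro (j | j) <;>
      · refine Fin.lastCases ?_ ?_ j
        · first
            | exact ha0
            | exact hb0
        · intro p
          first
            | exact hold (Sum.inl p)
            | exact hold (Sum.inr p)
  -- conclude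
  obtain ⟨v, hv⟩ := key t le_rfl
  have hli : LinearIndependent F v := by
    have := hv.comp Sum.inl Sum.inl_injective
    simpa using this
  refine ⟨span F (Set.range v), ?_, ?_⟩
  · rw [finrank_span_eq_card hli, Fintype.card_fin]
  · rw [linearIndependent_sum] at hv
    obtain ⟨-, -, hd⟩ := hv
    rw [Submodule.map_span, ← Set.range_comp]
    simp only [Sum.elim_comp_inl, Sum.elim_comp_inr] at hd
    exact disjoint_iff.mp hd
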